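/- Let H_r, H_u be independent exponential random variables with means σ_r², σ_u², let P_u, Δ_u, N₀ > 0 and g > 1. If the relay power is P_r = P_u σ_{uv}² (g - 1)/(Δ_u σ_r²) where g = exp(-Δ_u N₀/(P_u σ_{uv}²))/(1 - P_th) and 0 < P_th < 1, then the primary outage probability P(P_u H_{uv}/(P_r H_r + N₀) < Δ_u) = 1 - exp(-Δ_u N₀/(P_u σ_{uv}²))/(Δ_u P_r σ_r²/(P_u σ_{uv}²) + 1) equals exactly P_th. -/

import Mathlib

open MeasureTheory Real Set

lemma expIoi {c : ℝ} (hc : 0 < c) (a : ℝ) :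
    ∫ x in Set.Ioi a, Real.exp (-(c*x)) = Real.exp (-(c*a))/c := by
  have hderiv : ∀ x ∈ Set.Ici a, HasDerivAt (fun x => -Real.exp (-(c*x))/c) (Real.exp (-(c*x))) x := by
    intro x _
    have h1 : HasDerivAt (fun x : ℝ => -(c*x)) (-c) x := by
      have h0 := ((hasDerivAt_id x).const_mul c).neg
      simp only [mul_one] at h0
      exact h0
    have h3 := (h1.exp.neg.div_const c)
    refine h3.congr_deriv ?_
    field_simp
  have hint : IntegrableOn (fun x => Real.exp (-(c*x))) (Set.Ioi a) := by
    simpa [mul_comm] using exp_neg_integrableOn_Ioi a hc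
  have htend : Filter.Tendsto (fun x => -Real.exp (-(c*x))/c) Filter.atTop (nhds 0) := by
    have h1 : Filter.Tendsto (fun x : ℝ => c*x) Filter.atTop Filter.atTop :=
      Filter.Tendsto.const_mul_atTop hc Filter.tendsto_id
    have h2 := (Real.tendsto_exp_neg_atTop_nhds_zero.comp h1)
    have h3 := (h2.neg.div_const c)
    simpa using h3
  have := integral_Ioi_of_hasDerivAt_of_tendsto' hderiv hint htend
  rw [this]; ring

lemma expIoc {c : ℝ} (hc : 0 < c) {a b : ℝ} (hab : a ≤ b) :
    ∫ x in Set.Ioc a b, Real.exp (-(c*x)) = (Real.exp (-(c*a)) - Real.exp (-(c*b)))/c := by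
  rw [← intervalIntegral.integral_of_le hab]
  have hderiv : ∀ x ∈ Set.uIcc a b, HasDerivAt (fun x => -Real.exp (-(c*x))/c) (Real.exp (-(c*x))) x := by
    intro x _
    have h1 : HasDerivAt (fun x : ℝ => -(c*x)) (-c) x := by
      have h0 := ((hasDerivAt_id x).const_mul c).neg
      simp only [mul_one] at h0
      exact h0
    have h3 := (h1.exp.neg.div_const c)
    refine h3.congr_deriv ?_
    field_simp
  have hint : IntervalIntegrable (fun x => Real.exp (-(c*x))) volume a b :=
    (Continuous.intervalIntegrable (by continuity) a b)
  rw [intervalIntegral.integral_eq_sub_of_hasDerivAt hderiv hint]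
  ring

set_option maxHeartbeats 1000000 in
/-- Lemma 2: with relay power `Pr = Pu σuv² (g-1)/(Δu σr²)` and
`g = exp(-Δu N0/(Pu σuv²))/(1 - Pth) > 1`, the primary outage probability
`P(Pu·Huv/(Pr·Hr + N0) < Δu)` equals exactly the QoS threshold `Pth`. -/
theorem stmt_9 (Pu Δu N0 σuv σr Pth g Pr : ℝ)
    (hPu : 0 < Pu) (hΔu : 0 < Δu) (hN0 : 0 < N0) (hσuv : 0 < σuv) (hσr : 0 < σr)
    (hPth0 : 0 < Pth) (hPth1 : Pth < 1)
    (hg : g = Real.exp (-(Δu * N0) / (Pu * σuv)) / (1 - Pth)) (hg1 : 1 < g)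
    (hPr : Pr = Pu * σuv * (g - 1) / (Δu * σr)) :
    (∫ u in Set.Ioi (0:ℝ), ∫ r in Set.Ioi (0:ℝ),
        (if Pu * u / (Pr * r + N0) < Δu then (1:ℝ) else 0) *
          ((1 / σuv) * Real.exp (-u / σuv)) * ((1 / σr) * Real.exp (-r / σr)))
      = Pth := by
  have hg0 : (0:ℝ) < g - 1 := by linarith
  have hPr0 : 0 < Pr := by
    rw [hPr]; positivity
  have hΔPr : 0 < Δu * Pr := by positivity
  set t : ℝ → ℝ := fun u => (Pu*u - Δu*N0)/(Δu*Pr) with ht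
  set u0 : ℝ := Δu*N0/Pu with hu0
  have hu00 : 0 < u0 := by positivity
  -- inner integral
  have inner : ∀ u : ℝ,
      (∫ r in Set.Ioi (0:ℝ),
        (if Pu * u / (Pr * r + N0) < Δu then (1:ℝ) else 0) *
          ((1 / σuv) * Real.exp (-u / σuv)) * ((1 / σr) * Real.exp (-r / σr)))
      = (1 / σuv) * Real.exp (-u / σuv) * Real.exp (-(max 0 (t u))/σr) := by
    intro u
    have step1 : EqOn
        (fun r => (if Pu * u / (Pr * r + N0) < Δu then (1:ℝ) else 0) *
          ((1 / σuv) * Real.exp (-u / σuv)) * ((1 / σr) * Real.exp (-r / σr)))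
        (Set.indicator (Set.Ioi (t u))
          (fun r => (1 / σuv) * Real.exp (-u / σuv) * ((1 / σr) * Real.exp (-r / σr))))
        (Set.Ioi 0) := by
      intro r hr
      have hr0 : (0:ℝ) < r := hr
      have hden : 0 < Pr * r + N0 := by positivity
      have hcond : (Pu * u / (Pr * r + N0) < Δu) ↔ t u < r := by
        rw [div_lt_iff₀ hden, ht]
        rw [div_lt_iff₀ hΔPr]
        constructor <;> intro h <;> nlinarith
      simp only [Set.indicator_apply, Set.mem_Ioi, hcond]
      split_ifs <;> ring
    rw [setIntegral_congr_fun measurableSet_Ioi step1,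
        setIntegral_indicator measurableSet_Ioi, Set.Ioi_inter_Ioi]
    rw [integral_const_mul]
    have : ∀ r : ℝ, (1 / σr) * Real.exp (-r / σr) = (1/σr) * Real.exp (-((1/σr)*r)) := by
      intro r; congr 1; congr 1; field_simp
    simp_rw [this, integral_const_mul, expIoi (by positivity : (0:ℝ) < 1/σr)]
    have h4 : (1/σr) * (Real.exp (-(1/σr * (max 0 (t u))))/(1/σr)) = Real.exp (-(max 0 (t u))/σr) := by
      have harg : -(1/σr * (max 0 (t u))) = -(max 0 (t u))/σr := by ring
      rw [harg, mul_comm, div_mul_cancel₀ _ (by positivity : (1/σr) ≠ (0:ℝ))]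
    rw [h4]
  simp_rw [inner]
  -- constants
  set cc : ℝ := 1/σuv + Pu/(Δu*Pr*σr) with hccdef
  set dd : ℝ := N0/(Pr*σr) with hdddef
  have hcc0 : 0 < cc := by positivity
  set φ : ℝ → ℝ := fun u => (1 / σuv) * Real.exp (-u / σuv) * Real.exp (-(max 0 (t u))/σr) with hφ
  have hφcont : Continuous φ := by
    apply Continuous.mul
    · exact continuous_const.mul (Real.continuous_exp.comp (by continuity))
    · apply Real.continuous_exp.comp
      apply Continuous.div_const
      apply Continuous.neg
      exact continuous_const.max (by continuity)
  -- on Ioi u0, φ equals K * exp (-(cc*u))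
  have hEq2 : EqOn φ (fun u => (1/σuv)*Real.exp dd * Real.exp (-(cc*u))) (Set.Ioi u0) := by
    intro u hu
    have hu' : u0 < u := hu
    have htpos : 0 < t u := by
      rw [ht]
      apply div_pos _ hΔPr
      rw [hu0] at hu'
      have := (div_lt_iff₀ hPu).mp hu'
      nlinarith
    have hmax : max 0 (t u) = t u := max_eq_right htpos.le
    simp only [hφ, hmax]
    rw [mul_assoc, ← Real.exp_add, mul_assoc, ← Real.exp_add]
    congr 2
    rw [ht, hccdef, hdddef]
    field_simp [hσuv.ne', hΔu.ne', hPr0.ne', hσr.ne']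
    ring
  have hint2 : IntegrableOn φ (Set.Ioi u0) := by
    have hbase : IntegrableOn (fun u => Real.exp (-(cc*u))) (Set.Ioi u0) := by
      simpa [neg_mul] using exp_neg_integrableOn_Ioi u0 hcc0
    exact IntegrableOn.congr_fun (hbase.const_mul _) hEq2.symm measurableSet_Ioi
  have hint1 : IntegrableOn φ (Set.Ioc 0 u0) := hφcont.integrableOn_Ioc
  have hsplit : ∫ u in Set.Ioi (0:ℝ), φ u
      = (∫ u in Set.Ioc 0 u0, φ u) + ∫ u in Set.Ioi u0, φ u := by
    rw [← setIntegral_union (Set.Ioc_disjoint_Ioi le_rfl) measurableSet_Ioi hint1 hint2,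
        Set.Ioc_union_Ioi_eq_Ioi hu00.le]
  have I1 : (∫ u in Set.Ioc 0 u0, φ u) = 1 - Real.exp (-(u0/σuv)) := by
    have hEq1 : EqOn φ (fun u => (1/σuv)*Real.exp (-((1/σuv)*u))) (Set.Ioc 0 u0) := by
      intro u hu
      have htle : t u ≤ 0 := by
        rw [ht]
        apply div_nonpos_of_nonpos_of_nonneg _ hΔPr.le
        have := hu.2
        rw [hu0] at this
        have := (le_div_iff₀ hPu).mp this
        nlinarith
      have hmax : max 0 (t u) = 0 := max_eq_left htle
      simp only [hφ, hmax]
      rw [neg_zero, zero_div, Real.exp_zero, mul_one]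
      congr 2
      field_simp
    rw [setIntegral_congr_fun measurableSet_Ioc hEq1, integral_const_mul,
        expIoc (by positivity : (0:ℝ) < 1/σuv) hu00.le]
    field_simp
    simp
  have I2 : (∫ u in Set.Ioi u0, φ u) = (1/σuv)*Real.exp dd * (Real.exp (-(cc*u0))/cc) := by
    rw [setIntegral_congr_fun measurableSet_Ioi hEq2, integral_const_mul, expIoi hcc0]
  rw [hsplit, I1, I2]
  -- final arithmetic
  set E : ℝ := Real.exp (-(Δu * N0) / (Pu * σuv)) with hE
  have hE0 : 0 < E := Real.exp_pos _
  have hEu0 : Real.exp (-(u0/σuv)) = E := by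
    rw [hE]; congr 1; rw [hu0]; field_simp
  have hexp2 : Real.exp dd * Real.exp (-(cc*u0)) = E := by
    rw [← Real.exp_add, hE]
    congr 1
    rw [hdddef, hccdef, hu0, hPr]
    have hσrne := hσr.ne'
    have hσuvne := hσuv.ne'
    have hΔune := hΔu.ne'
    have hPune := hPu.ne'
    have hg0ne := hg0.ne'
    field_simp
    ring
  have hcceq : cc = g/(σuv*(g-1)) := by
    rw [hccdef, hPr]
    have hσrne := hσr.ne'
    have hσuvne := hσuv.ne'
    have hΔune := hΔu.ne'
    have hPune := hPu.ne'
    have hg0ne := hg0.ne'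
    field_simp
    ring
  have hEg : E = g * (1 - Pth) := by
    rw [hg, div_mul_cancel₀ _ (by linarith : (1:ℝ)-Pth ≠ 0)]
  have hgne : g ≠ 0 := by positivity
  have hg0ne := hg0.ne'
  have hσuvne := hσuv.ne'
  rw [hEu0]
  have h5 : ∀ a b c : ℝ, 1 / σuv * a * (b / c) = (a * b) / (σuv * c) := by
    intro a b c
    simp only [div_eq_mul_inv, mul_inv]
    ring
  rw [h5, hexp2, hcceq, hEg]
  field_simp
  ring
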